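/- Let c > 2 be a real number, let G be a simple graph with n ≥ 1 vertices and m edges such that every independent set of G has size at most n/c, let k ≥ 1 be an integer, and let H be the (2k)-subdivision of G, which has N = n + 2km vertices. Then every (p:q)-coloring of H satisfies q·(n + 2km) ≤ p·(n/c + m·k); in particular p/q ≥ N/(n/c + mk). -/

import Mathlib

/-- A set of vertices is independent if no two of its elements are adjacent. -/
def IsIndepSet {V : Type*} (G : SimpleGraph V) (S : Set V) : Prop :=
  ∀ u ∈ S, ∀ w ∈ S, ¬ G.Adj u w

/-- `H` is the `(2k)`-subdivision of `G`: every edge `e = {u,v}` of `G` is replaced by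
a path `(u, w^e_1, …, w^e_{2k}, v)` with `2k` new inner vertices, distinct inner
vertices for distinct edges. -/
structure IsSubdivision2k {V W : Type*} (G : SimpleGraph V) (k : ℕ) (H : SimpleGraph W) where
  /-- images of the original vertices -/
  vmap : V → W
  /-- the inner path nodes of each edge -/
  inner : G.edgeSet → Fin (2 * k) → W
  /-- a choice of the two endpoints of each edge -/
  ends : G.edgeSet → V × V
  ends_eq : ∀ e : G.edgeSet, (e : Sym2 V) = s((ends e).1, (ends e).2)
  vmap_inj : Function.Injective vmap
  inner_inj : Function.Injective fun pr : G.edgeSet × Fin (2 * k) => inner pr.1 pr.2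
  vmap_ne_inner : ∀ (a : V) (e : G.edgeSet) (i : Fin (2 * k)), vmap a ≠ inner e i
  cover : ∀ w : W, (∃ a : V, w = vmap a) ∨ ∃ (e : G.edgeSet) (i : Fin (2 * k)), w = inner e i
  adj_iff : ∀ x y : W, H.Adj x y ↔
    (∃ (e : G.edgeSet) (i j : Fin (2 * k)), (i : ℕ) + 1 = (j : ℕ) ∧
        ((x = inner e i ∧ y = inner e j) ∨ (x = inner e j ∧ y = inner e i))) ∨
    (∃ (e : G.edgeSet) (i : Fin (2 * k)), (i : ℕ) = 0 ∧
        ((x = vmap (ends e).1 ∧ y = inner e i) ∨ (y = vmap (ends e).1 ∧ x = inner e i))) ∨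
    (∃ (e : G.edgeSet) (i : Fin (2 * k)), (i : ℕ) = 2 * k - 1 ∧
        ((x = vmap (ends e).2 ∧ y = inner e i) ∨ (y = vmap (ends e).2 ∧ x = inner e i)))

/-- A `(p:q)`-coloring of `G`: each vertex gets a set of at least `q` colors out of
`p` colors, with adjacent vertices receiving disjoint sets. -/
def HasPQColoring {V : Type*} (G : SimpleGraph V) (p q : ℕ) : Prop :=
  ∃ X : V → Finset (Fin p), (∀ v, q ≤ (X v).card) ∧
    ∀ ⦃u v⦄, G.Adj u v → Disjoint (X u) (X v)


open scoped Classical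


lemma path_bound {k : ℕ} (S : Finset (Fin (2*k)))
    (h : ∀ i ∈ S, ∀ j ∈ S, (i:ℕ)+1 ≠ (j:ℕ)) : S.card ≤ k := by
  have := Finset.card_le_card_of_injOn (fun i : Fin (2*k) => (i:ℕ)/2)
    (t := Finset.range k)
    (fun i _ => by have := i.isLt; simp only [Finset.coe_range, Set.mem_Iio, Finset.mem_coe, Finset.mem_range]; omega)
    (fun i hi j hj hij => by
      have hik := i.isLt; have hjk := j.isLt
      have hij' : (i:ℕ)/2 = (j:ℕ)/2 := hij
      by_contra hne
      have hne' : (i:ℕ) ≠ (j:ℕ) := fun hh => hne (Fin.ext hh)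
      have : (i:ℕ)+1 = (j:ℕ) ∨ (j:ℕ)+1 = (i:ℕ) := by omega
      rcases this with h' | h'
      · exact h i hi j hj h'
      · exact h j hj i hi h')
  simpa using this

lemma path_bound' {k : ℕ} (hk : 1 ≤ k) (S : Finset (Fin (2*k)))
    (h : ∀ i ∈ S, ∀ j ∈ S, (i:ℕ)+1 ≠ (j:ℕ))
    (h0 : ∀ i ∈ S, (i:ℕ) ≠ 0) (h1 : ∀ i ∈ S, (i:ℕ) ≠ 2*k-1) :
    S.card + 1 ≤ k := by
  have := Finset.card_le_card_of_injOn (fun i : Fin (2*k) => ((i:ℕ)-1)/2)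
    (t := Finset.range (k-1))
    (fun i hi => by
      have := i.isLt; have := h0 i hi; have := h1 i hi
      simp only [Finset.coe_range, Set.mem_Iio, Finset.mem_coe, Finset.mem_range]; omega)
    (fun i hi j hj hij => by
      have hik := i.isLt; have hjk := j.isLt
      have := h0 i hi; have := h0 j hj
      have hij' : ((i:ℕ)-1)/2 = ((j:ℕ)-1)/2 := hij
      by_contra hne
      have hne' : (i:ℕ) ≠ (j:ℕ) := fun hh => hne (Fin.ext hh)
      have : (i:ℕ)+1 = (j:ℕ) ∨ (j:ℕ)+1 = (i:ℕ) := by omega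
      rcases this with h' | h'
      · exact h i hi j hj h'
      · exact h j hj i hi h')
  simp only [Finset.card_range] at this
  omega



lemma card_le_indep_add_edges {V : Type*} [Fintype V] (G : SimpleGraph V)
    (A : Finset V) : ∃ S : Finset V, S ⊆ A ∧ (∀ u ∈ S, ∀ w ∈ S, ¬ G.Adj u w) ∧
      A.card ≤ S.card + (Finset.univ.filter
        (fun e : G.edgeSet => ∀ v ∈ (e : Sym2 V), v ∈ A)).card := by
  classical
  induction A using Finset.strongInduction with
  | _ A ih =>
    rcases A.eq_empty_or_nonempty with rfl | ⟨v, hv⟩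
    · exact ⟨∅, by simp, by simp, by simp⟩
    · have hAe : A.erase v ⊆ A := fun x hx => Finset.mem_of_mem_erase hx
      have hsub : A.erase v ⊂ A := Finset.erase_ssubset hv
      obtain ⟨S, hSA, hSind, hScard⟩ := ih (A.erase v) hsub
      have hmono : (Finset.univ.filter
          (fun e : G.edgeSet => ∀ x ∈ (e : Sym2 V), x ∈ A.erase v)) ⊆
          (Finset.univ.filter
          (fun e : G.edgeSet => ∀ x ∈ (e : Sym2 V), x ∈ A)) := by
        apply Finset.monotone_filter_right
        intro e _ he x hx
        exact hAe (he x hx)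
      have hAcard : (A.erase v).card + 1 = A.card := Finset.card_erase_add_one hv
      by_cases hnb : ∃ u ∈ A, G.Adj v u
      · obtain ⟨u, hu, hadj⟩ := hnb
        refine ⟨S, fun x hx => hAe (hSA hx), hSind, ?_⟩
        have hlt : (Finset.univ.filter
            (fun e : G.edgeSet => ∀ x ∈ (e : Sym2 V), x ∈ A.erase v)).card <
            (Finset.univ.filter
            (fun e : G.edgeSet => ∀ x ∈ (e : Sym2 V), x ∈ A)).card := by
          apply Finset.card_lt_card
          refine ⟨hmono, fun hsup => ?_⟩
          set e₀ : G.edgeSet := ⟨s(v,u), G.mem_edgeSet.2 hadj⟩ with he₀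
          have hmem : e₀ ∈ Finset.univ.filter
              (fun e : G.edgeSet => ∀ x ∈ (e : Sym2 V), x ∈ A) := by
            simp only [Finset.mem_filter, Finset.mem_univ, true_and]
            intro x hx
            rcases Sym2.mem_iff.1 hx with rfl | rfl
            · exact hv
            · exact hu
          have := hsup hmem
          simp only [Finset.mem_filter, Finset.mem_univ, true_and] at this
          have hvv : v ∈ A.erase v := this v (by simp [he₀])
          exact (A.notMem_erase v) hvv
        omega
      · push_neg at hnb
        have hvS : v ∉ S := fun hvS => A.notMem_erase v (hSA hvS)
        refine ⟨insert v S, ?_, ?_, ?_⟩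
        · intro x hx
          rcases Finset.mem_insert.1 hx with rfl | hx
          · exact hv
          · exact hAe (hSA hx)
        · intro x hx y hy hadj
          rcases Finset.mem_insert.1 hx with hx' | hx' <;>
            rcases Finset.mem_insert.1 hy with hy' | hy'
          · subst hx'; subst hy'; exact G.loopless.irrefl _ hadj
          · subst hx'; exact hnb y (hAe (hSA hy')) hadj
          · subst hy'; exact hnb x (hAe (hSA hx')) hadj.symm
          · exact hSind x hx' y hy' hadj
        · rw [Finset.card_insert_of_notMem hvS]
          have := Finset.card_le_card hmono
          omega

lemma indep_H_bound {V W : Type*} [Fintype V] [Fintype W] (G : SimpleGraph V)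
    (k : ℕ) (hk : 1 ≤ k) (H : SimpleGraph W) (sub : IsSubdivision2k G k H)
    (c : ℝ) (hc : 0 < c) (n m : ℕ) (hn : n = Nat.card V) (hm : m = Nat.card G.edgeSet)
    (hind : ∀ S : Set V, IsIndepSet G S → (S.ncard : ℝ) ≤ (n:ℝ)/c)
    (I : Finset W) (hI : ∀ u ∈ I, ∀ w ∈ I, ¬ H.Adj u w) :
    (I.card : ℝ) ≤ (n:ℝ)/c + m * k := by
  classical
  set A : Finset V := Finset.univ.filter (fun a : V => sub.vmap a ∈ I) with hA
  set T : G.edgeSet → Finset (Fin (2*k)) :=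
    fun e => Finset.univ.filter (fun i : Fin (2*k) => sub.inner e i ∈ I) with hT
  -- Step 1: I.card ≤ A.card + ∑ e, (T e).card
  have hmeme : ∀ m : ℕ, m = m := fun m => rfl
  have step1 : I.card ≤ A.card + ∑ e : G.edgeSet, (T e).card := by
    have hsub1 : I ⊆ A.image sub.vmap ∪
        Finset.univ.biUnion (fun e : G.edgeSet => (T e).image (sub.inner e)) := by
      intro w hw
      rcases sub.cover w with ⟨a, rfl⟩ | ⟨e, i, rfl⟩
      · apply Finset.mem_union_left
        exact Finset.mem_image_of_mem _ (by simp [hA, hw])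
      · apply Finset.mem_union_right
        exact Finset.mem_biUnion.2 ⟨e, Finset.mem_univ e,
          Finset.mem_image_of_mem _ (by simp [hT, hw])⟩
    calc I.card ≤ _ := Finset.card_le_card hsub1
      _ ≤ (A.image sub.vmap).card +
          (Finset.univ.biUnion (fun e : G.edgeSet => (T e).image (sub.inner e))).card :=
        Finset.card_union_le _ _
      _ ≤ A.card + ∑ e : G.edgeSet, (T e).card := by
        gcongr
        · exact Finset.card_image_le
        · refine (Finset.card_biUnion_le).trans ?_
          exact Finset.sum_le_sum fun e _ => Finset.card_image_le
  -- Step 2: no consecutive indices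
  have hTind : ∀ e : G.edgeSet, ∀ i ∈ T e, ∀ j ∈ T e, (i:ℕ)+1 ≠ (j:ℕ) := by
    intro e i hi j hj hij
    simp only [hT, Finset.mem_filter, Finset.mem_univ, true_and] at hi hj
    exact hI _ hi _ hj ((sub.adj_iff _ _).2 (Or.inl ⟨e, i, j, hij, Or.inl ⟨rfl, rfl⟩⟩))
  set P : G.edgeSet → Prop := fun e => (sub.ends e).1 ∈ A ∧ (sub.ends e).2 ∈ A with hP
  have hTboundP : ∀ e : G.edgeSet, P e → (T e).card + 1 ≤ k := by
    intro e he
    refine path_bound' hk (T e) (hTind e) ?_ ?_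
    · intro i hi hi0
      simp only [hT, Finset.mem_filter, Finset.mem_univ, true_and] at hi
      have h1A : sub.vmap (sub.ends e).1 ∈ I := by
        have := he.1; simpa [hA] using this
      exact hI _ h1A _ hi ((sub.adj_iff _ _).2 (Or.inr (Or.inl ⟨e, i, hi0, Or.inl ⟨rfl, rfl⟩⟩)))
    · intro i hi hi1
      simp only [hT, Finset.mem_filter, Finset.mem_univ, true_and] at hi
      have h2A : sub.vmap (sub.ends e).2 ∈ I := by
        have := he.2; simpa [hA] using this
      exact hI _ h2A _ hi ((sub.adj_iff _ _).2 (Or.inr (Or.inr ⟨e, i, hi1, Or.inl ⟨rfl, rfl⟩⟩)))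
  have hTbound : ∀ e : G.edgeSet, (T e).card ≤ k := fun e => path_bound (T e) (hTind e)
  -- Step 3
  have hcardE : Fintype.card G.edgeSet = m := by
    rw [hm, Nat.card_eq_fintype_card]
  have step3 : (∑ e : G.edgeSet, (T e).card) + (Finset.univ.filter P).card ≤ k * m := by
    have : ∀ e : G.edgeSet, (T e).card + (if P e then 1 else 0) ≤ k := by
      intro e
      by_cases he : P e
      · rw [if_pos he]; exact hTboundP e he
      · rw [if_neg he]; simpa using hTbound e
    calc (∑ e : G.edgeSet, (T e).card) + (Finset.univ.filter P).card
        = ∑ e : G.edgeSet, ((T e).card + if P e then 1 else 0) := by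
          rw [Finset.sum_add_distrib, Finset.card_filter]
      _ ≤ ∑ _e : G.edgeSet, k := Finset.sum_le_sum fun e _ => this e
      _ = k * m := by simp [Finset.sum_const, hcardE, Nat.mul_comm]
  -- Step 4: lemma B, and filter P = filter (all endpoints in A)
  obtain ⟨S, hSA, hSind, hScard⟩ := card_le_indep_add_edges G A
  have hfeq : (Finset.univ.filter (fun e : G.edgeSet => ∀ v ∈ (e : Sym2 V), v ∈ A))
      = Finset.univ.filter P := by
    apply Finset.filter_congr
    intro e _
    rw [sub.ends_eq e]
    simp only [hP, Sym2.mem_iff]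
    constructor
    · intro h
      exact ⟨h _ (Or.inl rfl), h _ (Or.inr rfl)⟩
    · rintro ⟨h1, h2⟩ x (rfl | rfl)
      · exact h1
      · exact h2
  rw [hfeq] at hScard
  -- Step 5: combine
  have hnat : I.card ≤ S.card + k * m := by omega
  have hSreal : (S.card : ℝ) ≤ (n:ℝ)/c := by
    have := hind (S : Set V) (by
      intro u hu w hw
      exact hSind u (by simpa using hu) w (by simpa using hw))
    simpa [Set.ncard_coe_finset] using this
  have : (I.card : ℝ) ≤ (S.card : ℝ) + k * m := by exact_mod_cast hnat
  calc (I.card : ℝ) ≤ (S.card : ℝ) + k * m := this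
    _ ≤ (n:ℝ)/c + m * k := by rw [mul_comm (m:ℝ)]; linarith

/-- if every independent set of `G` (with `n ≥ 1` vertices, `m` edges)
has size at most `n/c` for a real `c > 2`, and `H` is the `(2k)`-subdivision of `G`
(which has `N = n + 2km` vertices), then every `(p:q)`-coloring of `H` satisfies
`q·(n + 2km) ≤ p·(n/c + m·k)`; in particular `p/q ≥ N/(n/c + mk)`. -/
theorem pq_coloring_subdivision_bound {V W : Type*} [Fintype V] [Fintype W]
    (G : SimpleGraph V) (c : ℝ) (hc : 2 < c)
    (n m : ℕ) (hn : n = Nat.card V) (hn1 : 1 ≤ n) (hm : m = Nat.card G.edgeSet)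
    (hind : ∀ S : Set V, IsIndepSet G S → (S.ncard : ℝ) ≤ (n : ℝ) / c)
    (k : ℕ) (hk : 1 ≤ k) (H : SimpleGraph W) (sub : IsSubdivision2k G k H)
    (hN : Nat.card W = n + 2 * k * m)
    (p q : ℕ) (hq : 1 ≤ q) (hpq : q ≤ p) (hcol : HasPQColoring H p q) :
    (q : ℝ) * ((n : ℝ) + 2 * k * m) ≤ (p : ℝ) * ((n : ℝ) / c + m * k) ∧
    ((n : ℝ) + 2 * k * m) / ((n : ℝ) / c + m * k) ≤ (p : ℝ) / (q : ℝ) := by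
  classical
  obtain ⟨X, hXq, hXdisj⟩ := hcol
  have hc0 : (0:ℝ) < c := lt_trans (by norm_num) hc
  have hW : Fintype.card W = n + 2 * k * m := by
    rw [← Nat.card_eq_fintype_card, hN]
  set cls : Fin p → Finset W := fun i => Finset.univ.filter (fun w => i ∈ X w) with hcls
  have hclsInd : ∀ i : Fin p, ∀ u ∈ cls i, ∀ w ∈ cls i, ¬ H.Adj u w := by
    intro i u hu w hw hadj
    simp only [hcls, Finset.mem_filter, Finset.mem_univ, true_and] at hu hw
    exact Finset.disjoint_left.1 (hXdisj hadj) hu hw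
  have hclsBound : ∀ i : Fin p, ((cls i).card : ℝ) ≤ (n:ℝ)/c + m * k :=
    fun i => indep_H_bound G k hk H sub c hc0 n m hn hm hind (cls i) (hclsInd i)
  -- double counting
  have hdc : ∑ w : W, (X w).card = ∑ i : Fin p, (cls i).card := by
    have h1 : ∀ w : W, (X w).card = ∑ i : Fin p, if i ∈ X w then 1 else 0 := by
      intro w
      rw [← Finset.card_filter]
      congr 1
      ext i; simp
    have h2 : ∀ i : Fin p, (cls i).card = ∑ w : W, if i ∈ X w then 1 else 0 := by
      intro i
      rw [hcls, Finset.card_filter]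
    simp only [h1, h2]
    exact Finset.sum_comm
  have hlow : q * (n + 2 * k * m) ≤ ∑ w : W, (X w).card := by
    calc q * (n + 2 * k * m) = q * Fintype.card W := by rw [hW]
      _ = ∑ _w : W, q := by simp [Finset.sum_const, Nat.mul_comm]
      _ ≤ ∑ w : W, (X w).card := Finset.sum_le_sum fun w _ => hXq w
  have hup : ((∑ i : Fin p, (cls i).card : ℕ) : ℝ) ≤ (p:ℝ) * ((n:ℝ)/c + m * k) := by
    push_cast
    calc ∑ i : Fin p, ((cls i).card : ℝ) ≤ ∑ _i : Fin p, ((n:ℝ)/c + m * k) :=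
          Finset.sum_le_sum fun i _ => hclsBound i
      _ = (p:ℝ) * ((n:ℝ)/c + m * k) := by simp [Finset.sum_const]; ring
  have main : (q : ℝ) * ((n : ℝ) + 2 * k * m) ≤ (p : ℝ) * ((n : ℝ) / c + m * k) := by
    have h1 : ((q * (n + 2 * k * m) : ℕ) : ℝ) ≤ ((∑ i : Fin p, (cls i).card : ℕ) : ℝ) := by
      exact_mod_cast (hdc ▸ hlow)
    calc (q : ℝ) * ((n : ℝ) + 2 * k * m) = ((q * (n + 2 * k * m) : ℕ) : ℝ) := by push_cast; ring
      _ ≤ _ := h1.trans hup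
  refine ⟨main, ?_⟩
  have hD : (0:ℝ) < (n:ℝ)/c + m * k := by
    have hnpos : (0:ℝ) < (n:ℝ) := by exact_mod_cast hn1
    have : (0:ℝ) < (n:ℝ)/c := div_pos hnpos hc0
    have hmk : (0:ℝ) ≤ (m:ℝ) * k := by positivity
    linarith
  have hq0 : (0:ℝ) < (q:ℝ) := by exact_mod_cast hq
  rw [div_le_div_iff₀ hD hq0]
  calc ((n : ℝ) + 2 * k * m) * q = (q : ℝ) * ((n : ℝ) + 2 * k * m) := by ring
    _ ≤ (p : ℝ) * ((n : ℝ) / c + m * k) := main
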